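/- Let 1/3 < α ≤ 1/2 and let X = (X¹, X²) be an α-Hölder rough path over V on [a,b], and (Y, Y†, Y♯) a controlled path with respect to X with values in L(V,W). Then the compensated Riemann sums J_{s,t}(𝒫) = Σᵢ (Y_{t_{i-1}} X¹_{t_{i-1},t_i} + Y†_{t_{i-1}} X²_{t_{i-1},t_i}) over partitions 𝒫 of [s,t] converge as the mesh tends to 0, defining the rough integral ∫ₛᵗ Y dX; moreover |∫ₛᵗ Y dX − (Y_s X¹_{s,t} + Y†_s X²_{s,t})| ≤ κ_α (t−s)^{3α} (‖Y♯‖_{2α,[a,b]} ‖X¹‖_{α,[a,b]} + ‖Y†‖_{α,[a,b]} ‖X²‖_{2α,[a,b]}), where κ_α = 2^{3α} ζ(3α). -/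

import Mathlib

open Filter Finset

section Aux

variable {V V2 W : Type*} [NormedAddCommGroup V] [NormedSpace ℝ V]
    [NormedAddCommGroup V2] [NormedSpace ℝ V2]
    [NormedAddCommGroup W] [NormedSpace ℝ W]

variable (X1 : ℝ → ℝ → V) (X2 : ℝ → ℝ → V2)
    (Y : ℝ → V →L[ℝ] W) (Ydag : ℝ → V2 →L[ℝ] W)

/-- The germ of the rough integral. -/
noncomputable def Xi (u v : ℝ) : W := Y u (X1 u v) + Ydag u (X2 u v)

/-- Riemann sum. -/
noncomputable def RS (N : ℕ) (p : ℕ → ℝ) : W :=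
  ∑ i ∈ Finset.range N, Xi X1 X2 Y Ydag (p i) (p (i+1))

variable (a b α : ℝ)
    (tmul : V →L[ℝ] V →L[ℝ] V2)
    (Ysharp : ℝ → ℝ → V →L[ℝ] W)

theorem xi_self
    (hChen1 : ∀ s u t : ℝ, a ≤ s → s ≤ u → u ≤ t → t ≤ b →
      X1 s t = X1 s u + X1 u t)
    (hChen2 : ∀ s u t : ℝ, a ≤ s → s ≤ u → u ≤ t → t ≤ b →
      X2 s t = X2 s u + X2 u t + tmul (X1 s u) (X1 u t))
    (x : ℝ) (hax : a ≤ x) (hxb : x ≤ b) :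
    X1 x x = 0 ∧ X2 x x = 0 ∧ Xi X1 X2 Y Ydag x x = 0 := by
  have h1 : X1 x x = 0 := by
    have := hChen1 x x x hax le_rfl le_rfl hxb
    have h := left_eq_add.mp this
    exact h
  have h2 : X2 x x = 0 := by
    have := hChen2 x x x hax le_rfl le_rfl hxb
    rw [h1] at this
    simp at this
    exact this
  refine ⟨h1, h2, ?_⟩
  simp [Xi, h1, h2]

theorem xi_delta
    (hChen1 : ∀ s u t : ℝ, a ≤ s → s ≤ u → u ≤ t → t ≤ b →
      X1 s t = X1 s u + X1 u t)
    (hChen2 : ∀ s u t : ℝ, a ≤ s → s ≤ u → u ≤ t → t ≤ b →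
      X2 s t = X2 s u + X2 u t + tmul (X1 s u) (X1 u t))
    (hCtrl : ∀ s t : ℝ, a ≤ s → s ≤ t → t ≤ b →
      Y t - Y s = (Ydag s).comp (tmul (X1 s t)) + Ysharp s t)
    (s u t : ℝ) (has : a ≤ s) (hsu : s ≤ u) (hut : u ≤ t) (htb : t ≤ b) :
    Xi X1 X2 Y Ydag s u + Xi X1 X2 Y Ydag u t - Xi X1 X2 Y Ydag s t
      = Ysharp s u (X1 u t) + (Ydag u - Ydag s) (X2 u t) := by
  have hc1 := hChen1 s u t has hsu hut htb
  have hc2 := hChen2 s u t has hsu hut htb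
  have hct := congrArg (fun f : V →L[ℝ] W => f (X1 u t))
    (hCtrl s u has hsu (le_trans hut htb))
  simp only [ContinuousLinearMap.sub_apply, ContinuousLinearMap.add_apply,
    ContinuousLinearMap.coe_comp', Function.comp_apply] at hct ⊢
  simp only [Xi, hc1, hc2, map_add]
  have h3 : Y u (X1 u t) = Y s (X1 u t) + ((Ydag s) ((tmul (X1 s u)) (X1 u t))
      + Ysharp s u (X1 u t)) := by rw [← hct]; abel
  rw [h3]; abel

end Aux

section Aux2

theorem rpow_prod_le (x y z γ1 γ2 : ℝ) (hx : 0 ≤ x) (hy : 0 ≤ y)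
    (hxz : x ≤ z) (hyz : y ≤ z) (hγ1 : 0 ≤ γ1) (hγ2 : 0 ≤ γ2)
    (h : γ1 + γ2 ≠ 0) : x ^ γ1 * y ^ γ2 ≤ z ^ (γ1 + γ2) := by
  have hz : 0 ≤ z := le_trans hx hxz
  calc x ^ γ1 * y ^ γ2 ≤ z ^ γ1 * z ^ γ2 := by
        apply mul_le_mul (Real.rpow_le_rpow hx hxz hγ1) (Real.rpow_le_rpow hy hyz hγ2)
          (Real.rpow_nonneg hy _) (Real.rpow_nonneg hz _)
    _ = z ^ (γ1 + γ2) := (Real.rpow_add' hz h).symm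

end Aux2

section Aux3

variable {V V2 W : Type*} [NormedAddCommGroup V] [NormedSpace ℝ V]
    [NormedAddCommGroup V2] [NormedSpace ℝ V2]
    [NormedAddCommGroup W] [NormedSpace ℝ W]

variable (X1 : ℝ → ℝ → V) (X2 : ℝ → ℝ → V2)
    (Y : ℝ → V →L[ℝ] W) (Ydag : ℝ → V2 →L[ℝ] W)
    (a b α : ℝ)
    (tmul : V →L[ℝ] V →L[ℝ] V2)
    (Ysharp : ℝ → ℝ → V →L[ℝ] W)
    (CX1 CX2 CYd CYs : ℝ)

theorem xi_delta_norm (hα : 0 < α)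
    (hCX1 : 0 ≤ CX1) (hCX2 : 0 ≤ CX2) (hCYd : 0 ≤ CYd) (hCYs : 0 ≤ CYs)
    (hX1 : ∀ s t : ℝ, a ≤ s → s ≤ t → t ≤ b → ‖X1 s t‖ ≤ CX1 * (t - s) ^ α)
    (hX2 : ∀ s t : ℝ, a ≤ s → s ≤ t → t ≤ b → ‖X2 s t‖ ≤ CX2 * (t - s) ^ (2 * α))
    (hYd : ∀ s t : ℝ, a ≤ s → s ≤ t → t ≤ b → ‖Ydag t - Ydag s‖ ≤ CYd * (t - s) ^ α)
    (hYs : ∀ s t : ℝ, a ≤ s → s ≤ t → t ≤ b → ‖Ysharp s t‖ ≤ CYs * (t - s) ^ (2 * α))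
    (hChen1 : ∀ s u t : ℝ, a ≤ s → s ≤ u → u ≤ t → t ≤ b →
      X1 s t = X1 s u + X1 u t)
    (hChen2 : ∀ s u t : ℝ, a ≤ s → s ≤ u → u ≤ t → t ≤ b →
      X2 s t = X2 s u + X2 u t + tmul (X1 s u) (X1 u t))
    (hCtrl : ∀ s t : ℝ, a ≤ s → s ≤ t → t ≤ b →
      Y t - Y s = (Ydag s).comp (tmul (X1 s t)) + Ysharp s t)
    (s u t : ℝ) (has : a ≤ s) (hsu : s ≤ u) (hut : u ≤ t) (htb : t ≤ b) :
    ‖Xi X1 X2 Y Ydag s u + Xi X1 X2 Y Ydag u t - Xi X1 X2 Y Ydag s t‖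
      ≤ (CYs * CX1 + CYd * CX2) * (t - s) ^ (3 * α) := by
  rw [xi_delta X1 X2 Y Ydag a b tmul Ysharp hChen1 hChen2 hCtrl s u t has hsu hut htb]
  have hub : u ≤ b := le_trans hut htb
  have h1 : ‖(Ysharp s u) (X1 u t)‖ ≤ (CYs * (u - s) ^ (2*α)) * (CX1 * (t - u) ^ α) := by
    calc ‖(Ysharp s u) (X1 u t)‖ ≤ ‖Ysharp s u‖ * ‖X1 u t‖ :=
          ContinuousLinearMap.le_opNorm _ _
      _ ≤ (CYs * (u - s) ^ (2*α)) * (CX1 * (t - u) ^ α) := by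
          apply mul_le_mul (hYs s u has hsu hub) (hX1 u t (le_trans has hsu) hut htb)
            (norm_nonneg _)
          exact mul_nonneg hCYs (Real.rpow_nonneg (by linarith) _)
  have h2 : ‖(Ydag u - Ydag s) (X2 u t)‖ ≤ (CYd * (u - s) ^ α) * (CX2 * (t - u) ^ (2*α)) := by
    calc ‖(Ydag u - Ydag s) (X2 u t)‖ ≤ ‖Ydag u - Ydag s‖ * ‖X2 u t‖ :=
          ContinuousLinearMap.le_opNorm _ _
      _ ≤ (CYd * (u - s) ^ α) * (CX2 * (t - u) ^ (2*α)) := by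
          apply mul_le_mul (hYd s u has hsu hub) (hX2 u t (le_trans has hsu) hut htb)
            (norm_nonneg _)
          exact mul_nonneg hCYd (Real.rpow_nonneg (by linarith) _)
  have key1 : (u - s) ^ (2*α) * (t - u) ^ α ≤ (t - s) ^ (3*α) := by
    have := rpow_prod_le (u-s) (t-u) (t-s) (2*α) α (by linarith) (by linarith)
      (by linarith) (by linarith) (by linarith) (by linarith)
      (by nlinarith : (0:ℝ) < 2*α + α).ne'
    rwa [show 2*α + α = 3*α by ring] at this
  have key2 : (u - s) ^ α * (t - u) ^ (2*α) ≤ (t - s) ^ (3*α) := by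
    have := rpow_prod_le (u-s) (t-u) (t-s) α (2*α) (by linarith) (by linarith)
      (by linarith) (by linarith) (by linarith) (by linarith)
      (by nlinarith : (0:ℝ) < α + 2*α).ne'
    rwa [show α + 2*α = 3*α by ring] at this
  calc ‖(Ysharp s u) (X1 u t) + (Ydag u - Ydag s) (X2 u t)‖
      ≤ ‖(Ysharp s u) (X1 u t)‖ + ‖(Ydag u - Ydag s) (X2 u t)‖ := norm_add_le _ _
    _ ≤ (CYs * (u - s) ^ (2*α)) * (CX1 * (t - u) ^ α)
        + (CYd * (u - s) ^ α) * (CX2 * (t - u) ^ (2*α)) := add_le_add h1 h2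
    _ ≤ CYs * CX1 * (t - s) ^ (3*α) + CYd * CX2 * (t - s) ^ (3*α) := by
        apply add_le_add
        · calc (CYs * (u - s) ^ (2*α)) * (CX1 * (t - u) ^ α)
              = (CYs * CX1) * ((u - s) ^ (2*α) * (t - u) ^ α) := by ring
            _ ≤ (CYs * CX1) * (t - s) ^ (3*α) := by
                exact mul_le_mul_of_nonneg_left key1 (mul_nonneg hCYs hCX1)
        · calc (CYd * (u - s) ^ α) * (CX2 * (t - u) ^ (2*α))
              = (CYd * CX2) * ((u - s) ^ α * (t - u) ^ (2*α)) := by ring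
            _ ≤ (CYd * CX2) * (t - s) ^ (3*α) := by
                exact mul_le_mul_of_nonneg_left key2 (mul_nonneg hCYd hCX2)
    _ = (CYs * CX1 + CYd * CX2) * (t - s) ^ (3*α) := by ring

end Aux3

theorem exists_small_pair (N : ℕ) (hN : 2 ≤ N) (p : ℕ → ℝ) (hp : Monotone p) :
    ∃ j, j + 2 ≤ N ∧ p (j+2) - p j ≤ 2 * (p N - p 0) / ((N:ℝ) - 1) := by
  by_contra hcon
  push_neg at hcon
  have hN1 : (1:ℝ) ≤ (N:ℝ) - 1 := by
    have : (2:ℝ) ≤ (N:ℝ) := by exact_mod_cast hN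
    linarith
  have hsum_le : ∑ j ∈ range (N-1), (p (j+2) - p j) ≤ 2 * (p N - p 0) := by
    have e0 : ∀ j, p (j+2) - p j = (p (j+1+1) - p (j+1)) + (p (j+1) - p j) := by
      intro j; ring_nf
    calc ∑ j ∈ range (N-1), (p (j+2) - p j)
        = ∑ j ∈ range (N-1), ((p (j+1+1) - p (j+1)) + (p (j+1) - p j)) := by
          apply Finset.sum_congr rfl; intro j _; exact e0 j
      _ = (∑ j ∈ range (N-1), (p (j+1+1) - p (j+1)))
          + ∑ j ∈ range (N-1), (p (j+1) - p j) := Finset.sum_add_distrib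
      _ = (p (N-1+1) - p 1) + (p (N-1) - p 0) := by
          rw [Finset.sum_range_sub (fun j => p (j+1)) (N-1), Finset.sum_range_sub p (N-1)]
      _ ≤ (p N - p 0) + (p N - p 0) := by
          have h1 : p (N-1+1) = p N := by congr 1; omega
          have h2 : p 0 ≤ p 1 := hp (by omega)
          have h3 : p (N-1) ≤ p N := hp (by omega)
          rw [h1]; linarith
      _ = 2 * (p N - p 0) := by ring
  have hsum_gt : 2 * (p N - p 0) < ∑ j ∈ range (N-1), (p (j+2) - p j) := by
    have hne : (range (N-1)).Nonempty := by
      rw [Finset.nonempty_range_iff]; omega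
    have := Finset.sum_lt_sum_of_nonempty hne
      (f := fun _ => 2 * (p N - p 0) / ((N:ℝ) - 1))
      (g := fun j => p (j+2) - p j)
      (by intro j hj; rw [Finset.mem_range] at hj; exact hcon j (by omega))
    rw [Finset.sum_const, nsmul_eq_mul, Finset.card_range] at this
    have hcard : ((N-1 : ℕ) : ℝ) = (N:ℝ) - 1 := by
      have : (1:ℕ) ≤ N := by omega
      push_cast [this]; ring
    rw [hcard, mul_div_cancel₀ _ (by linarith : (N:ℝ) - 1 ≠ 0)] at this
    simpa using this
  linarith

theorem sum_remove {W : Type*} [AddCommGroup W] (F : ℝ → ℝ → W) (N j : ℕ)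
    (hj : j + 2 ≤ N) (p : ℕ → ℝ) :
    ∑ i ∈ range N, F (p i) (p (i+1))
      = (∑ i ∈ range (N-1), F (if i ≤ j then p i else p (i+1))
          (if i+1 ≤ j then p (i+1) else p (i+2)))
        + (F (p j) (p (j+1)) + F (p (j+1)) (p (j+2)) - F (p j) (p (j+2))) := by
  have e1 : ∑ i ∈ range N, F (p i) (p (i+1))
      = ((∑ i ∈ range j, F (p i) (p (i+1)) + F (p j) (p (j+1))) + F (p (j+1)) (p (j+2)))
        + ∑ i ∈ Ico (j+2) N, F (p i) (p (i+1)) := by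
    rw [range_eq_Ico, ← Finset.sum_Ico_consecutive _ (Nat.zero_le (j+2)) hj,
      Finset.sum_Ico_succ_top (Nat.zero_le _), Finset.sum_Ico_succ_top (Nat.zero_le _),
      ← range_eq_Ico]
  have e2 : ∑ i ∈ range (N-1), F (if i ≤ j then p i else p (i+1))
        (if i+1 ≤ j then p (i+1) else p (i+2))
      = (∑ i ∈ range j, F (p i) (p (i+1)) + F (p j) (p (j+2)))
        + ∑ i ∈ Ico (j+1) (N-1), F (p (i+1)) (p (i+2)) := by
    rw [range_eq_Ico, ← Finset.sum_Ico_consecutive _ (Nat.zero_le (j+1)) (by omega : j+1 ≤ N-1),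
      Finset.sum_Ico_succ_top (Nat.zero_le _), ← range_eq_Ico]
    congr 1
    · congr 1
      · apply Finset.sum_congr rfl; intro i hi
        rw [Finset.mem_range] at hi
        rw [if_pos (by omega), if_pos (by omega)]
      · rw [if_pos le_rfl, if_neg (by omega)]
    · apply Finset.sum_congr rfl; intro i hi
      rw [Finset.mem_Ico] at hi
      rw [if_neg (by omega), if_neg (by omega)]
  have e3 : ∑ i ∈ Ico (j+1) (N-1), F (p (i+1)) (p (i+2))
      = ∑ i ∈ Ico (j+2) N, F (p i) (p (i+1)) := by
    rw [Finset.sum_Ico_eq_sum_range, Finset.sum_Ico_eq_sum_range]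
    have hc : N - 1 - (j+1) = N - (j+2) := by omega
    rw [hc]
    apply Finset.sum_congr rfl; intro i _
    have h1 : j + 1 + i + 1 = j + 2 + i := by omega
    have h2 : j + 1 + i + 2 = j + 2 + i + 1 := by omega
    rw [h1, h2]
  rw [e1, e2, e3]
  abel

section Core

variable {V V2 W : Type*} [NormedAddCommGroup V] [NormedSpace ℝ V]
    [NormedAddCommGroup V2] [NormedSpace ℝ V2]
    [NormedAddCommGroup W] [NormedSpace ℝ W]

variable (X1 : ℝ → ℝ → V) (X2 : ℝ → ℝ → V2)
    (Y : ℝ → V →L[ℝ] W) (Ydag : ℝ → V2 →L[ℝ] W)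
    (a b α : ℝ)
    (tmul : V →L[ℝ] V →L[ℝ] V2)
    (Ysharp : ℝ → ℝ → V →L[ℝ] W)
    (CX1 CX2 CYd CYs : ℝ)

theorem core_est (hα : 0 < α)
    (hCX1 : 0 ≤ CX1) (hCX2 : 0 ≤ CX2) (hCYd : 0 ≤ CYd) (hCYs : 0 ≤ CYs)
    (hX1 : ∀ s t : ℝ, a ≤ s → s ≤ t → t ≤ b → ‖X1 s t‖ ≤ CX1 * (t - s) ^ α)
    (hX2 : ∀ s t : ℝ, a ≤ s → s ≤ t → t ≤ b → ‖X2 s t‖ ≤ CX2 * (t - s) ^ (2 * α))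
    (hYd : ∀ s t : ℝ, a ≤ s → s ≤ t → t ≤ b → ‖Ydag t - Ydag s‖ ≤ CYd * (t - s) ^ α)
    (hYs : ∀ s t : ℝ, a ≤ s → s ≤ t → t ≤ b → ‖Ysharp s t‖ ≤ CYs * (t - s) ^ (2 * α))
    (hChen1 : ∀ s u t : ℝ, a ≤ s → s ≤ u → u ≤ t → t ≤ b →
      X1 s t = X1 s u + X1 u t)
    (hChen2 : ∀ s u t : ℝ, a ≤ s → s ≤ u → u ≤ t → t ≤ b →
      X2 s t = X2 s u + X2 u t + tmul (X1 s u) (X1 u t))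
    (hCtrl : ∀ s t : ℝ, a ≤ s → s ≤ t → t ≤ b →
      Y t - Y s = (Ydag s).comp (tmul (X1 s t)) + Ysharp s t) :
    ∀ (N : ℕ) (p : ℕ → ℝ), Monotone p → a ≤ p 0 → p N ≤ b →
    ‖RS X1 X2 Y Ydag N p - Xi X1 X2 Y Ydag (p 0) (p N)‖
      ≤ (CYs * CX1 + CYd * CX2) * (2 * (p N - p 0)) ^ (3*α)
        * ∑ k ∈ range (N-1), 1/((k:ℝ)+1)^(3*α) := by
  intro N
  induction N using Nat.strong_induction_on with
  | _ N IH =>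
    intro p hp hpa hpb
    match N with
    | 0 =>
      have h0 := (xi_self X1 X2 Y Ydag a b tmul hChen1 hChen2 (p 0) hpa hpb).2.2
      simp [RS, h0]
    | 1 =>
      simp [RS]
    | (N+2) =>
      obtain ⟨j, hj2, hjle⟩ := exists_small_pair (N+2) (by omega) p hp
      set C := CYs * CX1 + CYd * CX2 with hC
      have hCnn : 0 ≤ C := by positivity
      set L := p (N+2) - p 0 with hL
      have hLnn : 0 ≤ L := by
        have := hp (by omega : (0:ℕ) ≤ N+2); simp [hL]; linarith
      set q : ℕ → ℝ := fun k => if k ≤ j then p k else p (k+1) with hqdef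
      have hqmono : Monotone q := by
        intro x y hxy; dsimp [q]; split_ifs <;> apply hp <;> omega
      have hq0 : q 0 = p 0 := by simp [q]
      have hqN : q (N+1) = p (N+2) := by
        dsimp [q]; rw [if_neg (by omega)]
      have hrem := sum_remove (Xi X1 X2 Y Ydag) (N+2) j hj2 p
      have hIH := IH (N+1) (by omega) q hqmono (by rw [hq0]; exact hpa)
        (by rw [hqN]; exact hpb)
      have hdel := xi_delta_norm X1 X2 Y Ydag a b α tmul Ysharp CX1 CX2 CYd CYs hα
        hCX1 hCX2 hCYd hCYs hX1 hX2 hYd hYs hChen1 hChen2 hCtrl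
        (p j) (p (j+1)) (p (j+2)) (le_trans hpa (hp (Nat.zero_le j)))
        (hp (by omega)) (hp (by omega)) (le_trans (hp hj2) hpb)
      -- bound the removal cost
      have hNc : (0:ℝ) < (N:ℝ) + 1 := by positivity
      have hcost : (p (j+2) - p j) ^ (3*α) ≤ (2*L) ^ (3*α) * (1/((N:ℝ)+1)^(3*α)) := by
        have h3a : (0:ℝ) ≤ 3*α := by linarith
        have hbase : (0:ℝ) ≤ p (j+2) - p j := by
          have := hp (by omega : j ≤ j+2); linarith
        have hle2 : p (j+2) - p j ≤ 2*L/((N:ℝ)+1) := by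
          have : ((N:ℝ)+2) - 1 = (N:ℝ)+1 := by ring
          have hcast : ((N+2:ℕ):ℝ) - 1 = (N:ℝ)+1 := by push_cast; ring
          rw [hcast] at hjle
          exact hjle
        calc (p (j+2) - p j) ^ (3*α) ≤ (2*L/((N:ℝ)+1)) ^ (3*α) :=
              Real.rpow_le_rpow hbase hle2 h3a
          _ = (2*L) ^ (3*α) / ((N:ℝ)+1) ^ (3*α) := by
              rw [Real.div_rpow (by linarith) (le_of_lt hNc)]
          _ = (2*L) ^ (3*α) * (1/((N:ℝ)+1)^(3*α)) := by ring
      -- assemble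
      have hsplit : RS X1 X2 Y Ydag (N+2) p - Xi X1 X2 Y Ydag (p 0) (p (N+2))
          = (RS X1 X2 Y Ydag (N+1) q - Xi X1 X2 Y Ydag (q 0) (q (N+1)))
            + (Xi X1 X2 Y Ydag (p j) (p (j+1)) + Xi X1 X2 Y Ydag (p (j+1)) (p (j+2))
              - Xi X1 X2 Y Ydag (p j) (p (j+2))) := by
        rw [hq0, hqN]
        show (∑ i ∈ range (N+2), Xi X1 X2 Y Ydag (p i) (p (i+1)))
            - Xi X1 X2 Y Ydag (p 0) (p (N+2)) = _
        rw [hrem]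
        show _ = ((∑ i ∈ range (N+1), Xi X1 X2 Y Ydag (q i) (q (i+1)))
            - Xi X1 X2 Y Ydag (p 0) (p (N+2))) + _
        have : ∀ i, Xi X1 X2 Y Ydag (if i ≤ j then p i else p (i+1))
            (if i+1 ≤ j then p (i+1) else p (i+2)) = Xi X1 X2 Y Ydag (q i) (q (i+1)) := by
          intro i; rfl
        simp only [this]
        have e : N + 2 - 1 = N + 1 := by omega
        rw [e]
        abel
      have hq2 : q (N+1) - q 0 = L := by rw [hq0, hqN]
      calc ‖RS X1 X2 Y Ydag (N+2) p - Xi X1 X2 Y Ydag (p 0) (p (N+2))‖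
          ≤ ‖RS X1 X2 Y Ydag (N+1) q - Xi X1 X2 Y Ydag (q 0) (q (N+1))‖
            + ‖Xi X1 X2 Y Ydag (p j) (p (j+1)) + Xi X1 X2 Y Ydag (p (j+1)) (p (j+2))
              - Xi X1 X2 Y Ydag (p j) (p (j+2))‖ := by rw [hsplit]; exact norm_add_le _ _
        _ ≤ C * (2*(q (N+1) - q 0)) ^ (3*α) * ∑ k ∈ range ((N+1)-1), 1/((k:ℝ)+1)^(3*α)
            + C * (p (j+2) - p j) ^ (3*α) := add_le_add hIH hdel
        _ ≤ C * (2*L) ^ (3*α) * ∑ k ∈ range N, 1/((k:ℝ)+1)^(3*α)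
            + C * ((2*L) ^ (3*α) * (1/((N:ℝ)+1)^(3*α))) := by
            apply add_le_add
            · rw [hq2]
              have : (N+1)-1 = N := by omega
              rw [this]
            · exact mul_le_mul_of_nonneg_left hcost hCnn
        _ = C * (2*L) ^ (3*α) * ∑ k ∈ range (N+1), 1/((k:ℝ)+1)^(3*α) := by
            rw [Finset.sum_range_succ]; ring
        _ = C * (2*(p (N+2) - p 0)) ^ (3*α) * ∑ k ∈ range ((N+2)-1), 1/((k:ℝ)+1)^(3*α) := by
            norm_num [hL]

end Core

noncomputable def Zed (α : ℝ) : ℝ := ∑' n : ℕ, 1/((n:ℝ)+1)^(3*α)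

theorem Zed_summable (α : ℝ) (hα : 1/3 < α) :
    Summable (fun n : ℕ => 1/((n:ℝ)+1)^(3*α)) := by
  have h := (Real.summable_one_div_nat_rpow (p := 3*α)).2 (by linarith)
  have h2 := (summable_nat_add_iff 1).2 h
  simpa using h2

theorem partial_le_Zed (α : ℝ) (hα : 1/3 < α) (m : ℕ) :
    ∑ k ∈ Finset.range m, 1/((k:ℝ)+1)^(3*α) ≤ Zed α := by
  rw [Zed]
  exact Summable.sum_le_tsum _ (fun i _ => by positivity) (Zed_summable α hα)

theorem Zed_nonneg (α : ℝ) (hα : 1/3 < α) : 0 ≤ Zed α := by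
  have := partial_le_Zed α hα 0
  simpa using this

theorem rpow_le_mul (x m γ : ℝ) (hx : 0 ≤ x) (hxm : x ≤ m) (hγ : 1 ≤ γ) :
    x ^ γ ≤ m ^ (γ - 1) * x := by
  rcases eq_or_lt_of_le hx with h0 | h0
  · rw [← h0, Real.zero_rpow (by linarith : γ ≠ 0)]
    simp
  · have h1 : x ^ γ = x ^ (γ - 1) * x := by
      rw [← Real.rpow_add_one (ne_of_gt h0) (γ - 1)]
      congr 1; ring
    rw [h1]
    exact mul_le_mul_of_nonneg_right (Real.rpow_le_rpow hx hxm (by linarith)) hx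

theorem sum_blocks {W : Type*} [AddCommMonoid W] (F : ℕ → W) (σ : ℕ → ℕ)
    (hσ : Monotone σ) (K : ℕ) :
    ∑ j ∈ Finset.range K, ∑ i ∈ Finset.Ico (σ j) (σ (j+1)), F i
      = ∑ i ∈ Finset.Ico (σ 0) (σ K), F i := by
  induction K with
  | zero => simp
  | succ K ih =>
    rw [Finset.sum_range_succ, ih,
      Finset.sum_Ico_consecutive _ (hσ (Nat.zero_le K)) (hσ (Nat.le_succ K))]

section Core2

variable {V V2 W : Type*} [NormedAddCommGroup V] [NormedSpace ℝ V]
    [NormedAddCommGroup V2] [NormedSpace ℝ V2]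
    [NormedAddCommGroup W] [NormedSpace ℝ W]

variable (X1 : ℝ → ℝ → V) (X2 : ℝ → ℝ → V2)
    (Y : ℝ → V →L[ℝ] W) (Ydag : ℝ → V2 →L[ℝ] W)
    (a b α : ℝ)
    (tmul : V →L[ℝ] V →L[ℝ] V2)
    (Ysharp : ℝ → ℝ → V →L[ℝ] W)
    (CX1 CX2 CYd CYs : ℝ)

theorem core_est' (hα : 1/3 < α)
    (hCX1 : 0 ≤ CX1) (hCX2 : 0 ≤ CX2) (hCYd : 0 ≤ CYd) (hCYs : 0 ≤ CYs)
    (hX1 : ∀ s t : ℝ, a ≤ s → s ≤ t → t ≤ b → ‖X1 s t‖ ≤ CX1 * (t - s) ^ α)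
    (hX2 : ∀ s t : ℝ, a ≤ s → s ≤ t → t ≤ b → ‖X2 s t‖ ≤ CX2 * (t - s) ^ (2 * α))
    (hYd : ∀ s t : ℝ, a ≤ s → s ≤ t → t ≤ b → ‖Ydag t - Ydag s‖ ≤ CYd * (t - s) ^ α)
    (hYs : ∀ s t : ℝ, a ≤ s → s ≤ t → t ≤ b → ‖Ysharp s t‖ ≤ CYs * (t - s) ^ (2 * α))
    (hChen1 : ∀ s u t : ℝ, a ≤ s → s ≤ u → u ≤ t → t ≤ b →
      X1 s t = X1 s u + X1 u t)
    (hChen2 : ∀ s u t : ℝ, a ≤ s → s ≤ u → u ≤ t → t ≤ b →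
      X2 s t = X2 s u + X2 u t + tmul (X1 s u) (X1 u t))
    (hCtrl : ∀ s t : ℝ, a ≤ s → s ≤ t → t ≤ b →
      Y t - Y s = (Ydag s).comp (tmul (X1 s t)) + Ysharp s t)
    (N : ℕ) (p : ℕ → ℝ) (hp : Monotone p) (hpa : a ≤ p 0) (hpb : p N ≤ b) :
    ‖RS X1 X2 Y Ydag N p - Xi X1 X2 Y Ydag (p 0) (p N)‖
      ≤ ((CYs * CX1 + CYd * CX2) * (2^(3*α) * Zed α)) * (p N - p 0) ^ (3*α) := by
  have h := core_est X1 X2 Y Ydag a b α tmul Ysharp CX1 CX2 CYd CYs (by linarith)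
    hCX1 hCX2 hCYd hCYs hX1 hX2 hYd hYs hChen1 hChen2 hCtrl N p hp hpa hpb
  have hLnn : (0:ℝ) ≤ p N - p 0 := by
    have := hp (Nat.zero_le N); linarith
  have hmul : (2 * (p N - p 0)) ^ (3*α) = 2^(3*α) * (p N - p 0)^(3*α) :=
    Real.mul_rpow (by norm_num) hLnn
  calc ‖RS X1 X2 Y Ydag N p - Xi X1 X2 Y Ydag (p 0) (p N)‖
      ≤ (CYs * CX1 + CYd * CX2) * (2 * (p N - p 0)) ^ (3*α)
        * ∑ k ∈ Finset.range (N-1), 1/((k:ℝ)+1)^(3*α) := h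
    _ ≤ (CYs * CX1 + CYd * CX2) * (2 * (p N - p 0)) ^ (3*α) * Zed α := by
        apply mul_le_mul_of_nonneg_left (partial_le_Zed α hα _)
        apply mul_nonneg (by positivity) (Real.rpow_nonneg (by linarith) _)
    _ = ((CYs * CX1 + CYd * CX2) * (2^(3*α) * Zed α)) * (p N - p 0) ^ (3*α) := by
        rw [hmul]; ring

theorem refine_est (hα : 1/3 < α)
    (hCX1 : 0 ≤ CX1) (hCX2 : 0 ≤ CX2) (hCYd : 0 ≤ CYd) (hCYs : 0 ≤ CYs)
    (hX1 : ∀ s t : ℝ, a ≤ s → s ≤ t → t ≤ b → ‖X1 s t‖ ≤ CX1 * (t - s) ^ α)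
    (hX2 : ∀ s t : ℝ, a ≤ s → s ≤ t → t ≤ b → ‖X2 s t‖ ≤ CX2 * (t - s) ^ (2 * α))
    (hYd : ∀ s t : ℝ, a ≤ s → s ≤ t → t ≤ b → ‖Ydag t - Ydag s‖ ≤ CYd * (t - s) ^ α)
    (hYs : ∀ s t : ℝ, a ≤ s → s ≤ t → t ≤ b → ‖Ysharp s t‖ ≤ CYs * (t - s) ^ (2 * α))
    (hChen1 : ∀ s u t : ℝ, a ≤ s → s ≤ u → u ≤ t → t ≤ b →
      X1 s t = X1 s u + X1 u t)
    (hChen2 : ∀ s u t : ℝ, a ≤ s → s ≤ u → u ≤ t → t ≤ b →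
      X2 s t = X2 s u + X2 u t + tmul (X1 s u) (X1 u t))
    (hCtrl : ∀ s t : ℝ, a ≤ s → s ≤ t → t ≤ b →
      Y t - Y s = (Ydag s).comp (tmul (X1 s t)) + Ysharp s t)
    (M K : ℕ) (q : ℕ → ℝ) (σ : ℕ → ℕ) (hq : Monotone q)
    (hqa : a ≤ q 0) (hqb : q M ≤ b)
    (hσ : Monotone σ) (hσ0 : σ 0 = 0) (hσK : σ K = M)
    (m : ℝ) (hm0 : 0 ≤ m) (hm : ∀ j, j < K → q (σ (j+1)) - q (σ j) ≤ m) :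
    ‖RS X1 X2 Y Ydag M q - RS X1 X2 Y Ydag K (fun j => q (σ j))‖
      ≤ ((CYs * CX1 + CYd * CX2) * (2^(3*α) * Zed α)) * m ^ (3*α - 1) * (q M - q 0) := by
  set C2 := (CYs * CX1 + CYd * CX2) * (2^(3*α) * Zed α) with hC2
  have hC2nn : 0 ≤ C2 := by
    apply mul_nonneg (by positivity)
    exact mul_nonneg (Real.rpow_nonneg (by norm_num) _) (Zed_nonneg α hα)
  have hdecomp : RS X1 X2 Y Ydag M q
      = ∑ j ∈ Finset.range K, ∑ i ∈ Finset.Ico (σ j) (σ (j+1)),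
          Xi X1 X2 Y Ydag (q i) (q (i+1)) := by
    rw [sum_blocks _ σ hσ K, hσ0, hσK, RS, Finset.range_eq_Ico]
  have hdiff : RS X1 X2 Y Ydag M q - RS X1 X2 Y Ydag K (fun j => q (σ j))
      = ∑ j ∈ Finset.range K,
          ((∑ i ∈ Finset.Ico (σ j) (σ (j+1)), Xi X1 X2 Y Ydag (q i) (q (i+1)))
            - Xi X1 X2 Y Ydag (q (σ j)) (q (σ (j+1)))) := by
    rw [hdecomp, RS, Finset.sum_sub_distrib]
  rw [hdiff]
  have hterm : ∀ j, j < K →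
      ‖(∑ i ∈ Finset.Ico (σ j) (σ (j+1)), Xi X1 X2 Y Ydag (q i) (q (i+1)))
        - Xi X1 X2 Y Ydag (q (σ j)) (q (σ (j+1)))‖
      ≤ C2 * m ^ (3*α - 1) * (q (σ (j+1)) - q (σ j)) := by
    intro j hj
    have hσj : σ j ≤ σ (j+1) := hσ (Nat.le_succ j)
    set pj : ℕ → ℝ := fun i => q (σ j + i) with hpj
    have hpjm : Monotone pj := fun x y hxy => hq (by omega)
    have hpj0 : pj 0 = q (σ j) := rfl
    have hpjN : pj (σ (j+1) - σ j) = q (σ (j+1)) := by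
      dsimp [pj]; congr 1; omega
    have hinner : ∑ i ∈ Finset.Ico (σ j) (σ (j+1)), Xi X1 X2 Y Ydag (q i) (q (i+1))
        = RS X1 X2 Y Ydag (σ (j+1) - σ j) pj := by
      rw [RS, Finset.sum_Ico_eq_sum_range]
      exact Finset.sum_congr rfl fun k _ => rfl
    have hcore := core_est' X1 X2 Y Ydag a b α tmul Ysharp CX1 CX2 CYd CYs hα
      hCX1 hCX2 hCYd hCYs hX1 hX2 hYd hYs hChen1 hChen2 hCtrl
      (σ (j+1) - σ j) pj hpjm
      (le_trans hqa (hq (Nat.zero_le _)))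
      (by rw [hpjN]; exact le_trans (hq (by rw [← hσK]; exact hσ (by omega))) hqb)
    rw [hinner]
    rw [hpj0, hpjN] at hcore
    calc ‖RS X1 X2 Y Ydag (σ (j+1) - σ j) pj - Xi X1 X2 Y Ydag (q (σ j)) (q (σ (j+1)))‖
        ≤ C2 * (q (σ (j+1)) - q (σ j)) ^ (3*α) := hcore
      _ ≤ C2 * (m ^ (3*α - 1) * (q (σ (j+1)) - q (σ j))) := by
          apply mul_le_mul_of_nonneg_left _ hC2nn
          apply rpow_le_mul _ _ _ (by have := hq hσj; linarith) (hm j hj) (by linarith)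
      _ = C2 * m ^ (3*α - 1) * (q (σ (j+1)) - q (σ j)) := by ring
  calc ‖∑ j ∈ Finset.range K,
        ((∑ i ∈ Finset.Ico (σ j) (σ (j+1)), Xi X1 X2 Y Ydag (q i) (q (i+1)))
          - Xi X1 X2 Y Ydag (q (σ j)) (q (σ (j+1))))‖
      ≤ ∑ j ∈ Finset.range K, C2 * m ^ (3*α - 1) * (q (σ (j+1)) - q (σ j)) := by
        apply norm_sum_le_of_le
        intro j hj
        exact hterm j (Finset.mem_range.mp hj)
    _ = C2 * m ^ (3*α - 1) * ∑ j ∈ Finset.range K, (q (σ (j+1)) - q (σ j)) := by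
        rw [Finset.mul_sum]
    _ = C2 * m ^ (3*α - 1) * (q (σ K) - q (σ 0)) := by
        rw [Finset.sum_range_sub (fun j => q (σ j)) K]
    _ = C2 * m ^ (3*α - 1) * (q M - q 0) := by rw [hσ0, hσK]

end Core2

theorem rpow_two_le (δ α : ℝ) (h0 : 0 ≤ δ) (h1 : δ ≤ 1) (hα : 0 < α) :
    δ ^ (2*α) ≤ δ ^ α := by
  rcases eq_or_lt_of_le h0 with h | h
  · rw [← h, Real.zero_rpow (by linarith : 2*α ≠ 0), Real.zero_rpow (by linarith : α ≠ 0)]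
  · exact Real.rpow_le_rpow_of_exponent_ge h h1 (by linarith)

section Cont

variable {V V2 W : Type*} [NormedAddCommGroup V] [NormedSpace ℝ V]
    [NormedAddCommGroup V2] [NormedSpace ℝ V2]
    [NormedAddCommGroup W] [NormedSpace ℝ W]

variable (X1 : ℝ → ℝ → V) (X2 : ℝ → ℝ → V2)
    (Y : ℝ → V →L[ℝ] W) (Ydag : ℝ → V2 →L[ℝ] W)
    (a b α : ℝ)
    (tmul : V →L[ℝ] V →L[ℝ] V2)
    (Ysharp : ℝ → ℝ → V →L[ℝ] W)
    (CX1 CX2 CYd CYs : ℝ)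

/-- modulus constant for continuity of `Xi` -/
noncomputable def Dc : ℝ :=
  (‖Y a‖ + ‖Ydag a‖*‖tmul‖*(CX1*(b-a)^α) + CYs*(b-a)^(2*α)) * (2*CX1)
  + ((‖Ydag a‖ + CYd * (b-a)^α)*‖tmul‖*CX1 + CYs) * (CX1*(b-a)^α)
  + (‖Ydag a‖ + CYd * (b-a)^α) * (2*CX2 + 2*‖tmul‖*CX1*(CX1*(b-a)^α))
  + CYd * (CX2*(b-a)^(2*α))

theorem Dc_nonneg (hab : a ≤ b)
    (hCX1 : 0 ≤ CX1) (hCX2 : 0 ≤ CX2) (hCYd : 0 ≤ CYd) (hCYs : 0 ≤ CYs) :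
    0 ≤ Dc Y Ydag a b α tmul CX1 CX2 CYd CYs := by
  have h1 : (0:ℝ) ≤ (b-a)^α := Real.rpow_nonneg (by linarith) _
  have h2 : (0:ℝ) ≤ (b-a)^(2*α) := Real.rpow_nonneg (by linarith) _
  have n1 := norm_nonneg (Y a)
  have n2 := norm_nonneg (Ydag a)
  have n3 : (0:ℝ) ≤ ‖tmul‖ := ContinuousLinearMap.opNorm_nonneg tmul
  unfold Dc
  positivity

theorem xi_cont (hα : 0 < α) (hab : a ≤ b)
    (hCX1 : 0 ≤ CX1) (hCX2 : 0 ≤ CX2) (hCYd : 0 ≤ CYd) (hCYs : 0 ≤ CYs)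
    (hX1 : ∀ s t : ℝ, a ≤ s → s ≤ t → t ≤ b → ‖X1 s t‖ ≤ CX1 * (t - s) ^ α)
    (hX2 : ∀ s t : ℝ, a ≤ s → s ≤ t → t ≤ b → ‖X2 s t‖ ≤ CX2 * (t - s) ^ (2 * α))
    (hYd : ∀ s t : ℝ, a ≤ s → s ≤ t → t ≤ b → ‖Ydag t - Ydag s‖ ≤ CYd * (t - s) ^ α)
    (hYs : ∀ s t : ℝ, a ≤ s → s ≤ t → t ≤ b → ‖Ysharp s t‖ ≤ CYs * (t - s) ^ (2 * α))
    (hChen1 : ∀ s u t : ℝ, a ≤ s → s ≤ u → u ≤ t → t ≤ b →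
      X1 s t = X1 s u + X1 u t)
    (hChen2 : ∀ s u t : ℝ, a ≤ s → s ≤ u → u ≤ t → t ≤ b →
      X2 s t = X2 s u + X2 u t + tmul (X1 s u) (X1 u t))
    (hCtrl : ∀ s t : ℝ, a ≤ s → s ≤ t → t ≤ b →
      Y t - Y s = (Ydag s).comp (tmul (X1 s t)) + Ysharp s t)
    (δ u v u' v' : ℝ) (hδ0 : 0 ≤ δ) (hδ1 : δ ≤ 1)
    (hau : a ≤ u) (huu' : u ≤ u') (hu'v : u' ≤ v) (hvv' : v ≤ v') (hv'b : v' ≤ b)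
    (hd1 : u' - u ≤ δ) (hd2 : v' - v ≤ δ) :
    ‖Xi X1 X2 Y Ydag u' v' - Xi X1 X2 Y Ydag u v‖
      ≤ Dc Y Ydag a b α tmul CX1 CX2 CYd CYs * δ ^ α := by
  have hvb : v ≤ b := le_trans hvv' hv'b
  have hu'b : u' ≤ b := le_trans hu'v hvb
  have hub : u ≤ b := le_trans huu' hu'b
  have hau' : a ≤ u' := le_trans hau huu'
  have hav : a ≤ v := le_trans hau' hu'v
  have huv : u ≤ v := le_trans huu' hu'v
  have huv' : u ≤ v' := le_trans huv hvv'
  have hu'v' : u' ≤ v' := le_trans hu'v hvv'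
  have hδα : (0:ℝ) ≤ δ ^ α := Real.rpow_nonneg hδ0 _
  have hba : (0:ℝ) ≤ (b-a)^α := Real.rpow_nonneg (by linarith) _
  have htm : (0:ℝ) ≤ ‖tmul‖ := ContinuousLinearMap.opNorm_nonneg tmul
  -- abbreviations
  set MX1 := CX1*(b-a)^α with hMX1
  set MX2 := CX2*(b-a)^(2*α) with hMX2
  set BYd := ‖Ydag a‖ + CYd * (b-a)^α with hBYd
  set BY := ‖Y a‖ + ‖Ydag a‖*‖tmul‖*MX1 + CYs*(b-a)^(2*α) with hBY
  have hMX1nn : 0 ≤ MX1 := mul_nonneg hCX1 hba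
  have hMX2nn : 0 ≤ MX2 := mul_nonneg hCX2 (Real.rpow_nonneg (by linarith) _)
  have hBYdnn : 0 ≤ BYd := add_nonneg (norm_nonneg _) (mul_nonneg hCYd hba)
  have hBYnn : 0 ≤ BY := by
    apply add_nonneg (add_nonneg (norm_nonneg _) _)
    · exact mul_nonneg hCYs (Real.rpow_nonneg (by linarith) _)
    · exact mul_nonneg (mul_nonneg (norm_nonneg _) htm) hMX1nn
  -- increments of δ-size
  have hX1uu' : ‖X1 u u'‖ ≤ CX1 * δ^α := by
    calc ‖X1 u u'‖ ≤ CX1 * (u'-u)^α := hX1 u u' hau huu' hu'b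
      _ ≤ CX1 * δ^α := by
        apply mul_le_mul_of_nonneg_left (Real.rpow_le_rpow (by linarith) hd1 (by linarith)) hCX1
  have hX1vv' : ‖X1 v v'‖ ≤ CX1 * δ^α := by
    calc ‖X1 v v'‖ ≤ CX1 * (v'-v)^α := hX1 v v' hav hvv' hv'b
      _ ≤ CX1 * δ^α := by
        apply mul_le_mul_of_nonneg_left (Real.rpow_le_rpow (by linarith) hd2 (by linarith)) hCX1
  have hX2uu' : ‖X2 u u'‖ ≤ CX2 * δ^α := by
    calc ‖X2 u u'‖ ≤ CX2 * (u'-u)^(2*α) := hX2 u u' hau huu' hu'b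
      _ ≤ CX2 * δ^(2*α) := by
        apply mul_le_mul_of_nonneg_left
          (Real.rpow_le_rpow (by linarith) hd1 (by linarith)) hCX2
      _ ≤ CX2 * δ^α :=
        mul_le_mul_of_nonneg_left (rpow_two_le δ α hδ0 hδ1 hα) hCX2
  have hX2vv' : ‖X2 v v'‖ ≤ CX2 * δ^α := by
    calc ‖X2 v v'‖ ≤ CX2 * (v'-v)^(2*α) := hX2 v v' hav hvv' hv'b
      _ ≤ CX2 * δ^(2*α) := by
        apply mul_le_mul_of_nonneg_left
          (Real.rpow_le_rpow (by linarith) hd2 (by linarith)) hCX2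
      _ ≤ CX2 * δ^α :=
        mul_le_mul_of_nonneg_left (rpow_two_le δ α hδ0 hδ1 hα) hCX2
  -- global bounds
  have hX1uv : ‖X1 u v‖ ≤ MX1 := by
    calc ‖X1 u v‖ ≤ CX1 * (v-u)^α := hX1 u v hau huv hvb
      _ ≤ MX1 := by
        rw [hMX1]
        apply mul_le_mul_of_nonneg_left
          (Real.rpow_le_rpow (by linarith) (by linarith) (by linarith)) hCX1
  have hX1u'v' : ‖X1 u' v'‖ ≤ MX1 := by
    calc ‖X1 u' v'‖ ≤ CX1 * (v'-u')^α := hX1 u' v' hau' hu'v' hv'b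
      _ ≤ MX1 := by
        rw [hMX1]
        apply mul_le_mul_of_nonneg_left
          (Real.rpow_le_rpow (by linarith) (by linarith) (by linarith)) hCX1
  have hX2uv : ‖X2 u v‖ ≤ MX2 := by
    calc ‖X2 u v‖ ≤ CX2 * (v-u)^(2*α) := hX2 u v hau huv hvb
      _ ≤ MX2 := by
        rw [hMX2]
        apply mul_le_mul_of_nonneg_left
          (Real.rpow_le_rpow (by linarith) (by linarith) (by linarith)) hCX2
  have hYdu' : ‖Ydag u'‖ ≤ BYd := by
    calc ‖Ydag u'‖ = ‖Ydag a + (Ydag u' - Ydag a)‖ := by congr 1; abel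
      _ ≤ ‖Ydag a‖ + ‖Ydag u' - Ydag a‖ := norm_add_le _ _
      _ ≤ BYd := by
        rw [hBYd]
        apply add_le_add le_rfl
        calc ‖Ydag u' - Ydag a‖ ≤ CYd * (u'-a)^α := hYd a u' le_rfl hau' hu'b
          _ ≤ CYd * (b-a)^α := by
            apply mul_le_mul_of_nonneg_left
              (Real.rpow_le_rpow (by linarith) (by linarith) (by linarith)) hCYd
  have hYddiff : ‖Ydag u' - Ydag u‖ ≤ CYd * δ^α := by
    calc ‖Ydag u' - Ydag u‖ ≤ CYd * (u'-u)^α := hYd u u' hau huu' hu'b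
      _ ≤ CYd * δ^α := by
        apply mul_le_mul_of_nonneg_left
          (Real.rpow_le_rpow (by linarith) hd1 (by linarith)) hCYd
  have hYu' : ‖Y u'‖ ≤ BY := by
    have hc := hCtrl a u' le_rfl hau' hu'b
    have : Y u' = Y a + ((Ydag a).comp (tmul (X1 a u')) + Ysharp a u') := by
      rw [← hc]; abel
    rw [this]
    calc ‖Y a + ((Ydag a).comp (tmul (X1 a u')) + Ysharp a u')‖
        ≤ ‖Y a‖ + (‖(Ydag a).comp (tmul (X1 a u'))‖ + ‖Ysharp a u'‖) :=
          le_trans (norm_add_le _ _) (by gcongr; exact norm_add_le _ _)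
      _ ≤ BY := by
        rw [hBY, add_assoc]
        apply add_le_add le_rfl
        apply add_le_add
        · calc ‖(Ydag a).comp (tmul (X1 a u'))‖
              ≤ ‖Ydag a‖ * ‖tmul (X1 a u')‖ := ContinuousLinearMap.opNorm_comp_le _ _
            _ ≤ ‖Ydag a‖ * (‖tmul‖ * ‖X1 a u'‖) := by
                apply mul_le_mul_of_nonneg_left (ContinuousLinearMap.le_opNorm _ _)
                  (norm_nonneg _)
            _ ≤ ‖Ydag a‖*‖tmul‖*MX1 := by
                rw [hMX1, ← mul_assoc]
                apply mul_le_mul_of_nonneg_left _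
                  (mul_nonneg (norm_nonneg (Ydag a)) htm)
                calc ‖X1 a u'‖ ≤ CX1 * (u'-a)^α := hX1 a u' le_rfl hau' hu'b
                  _ ≤ CX1 * (b-a)^α := by
                    apply mul_le_mul_of_nonneg_left
                      (Real.rpow_le_rpow (by linarith) (by linarith) (by linarith)) hCX1
        · calc ‖Ysharp a u'‖ ≤ CYs * (u'-a)^(2*α) := hYs a u' le_rfl hau' hu'b
            _ ≤ CYs*(b-a)^(2*α) := by
              apply mul_le_mul_of_nonneg_left
                (Real.rpow_le_rpow (by linarith) (by linarith) (by linarith)) hCYs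
  have hYdiff : ‖Y u' - Y u‖ ≤ (BYd*‖tmul‖*CX1 + CYs) * δ^α := by
    have hc := hCtrl u u' hau huu' hu'b
    rw [hc]
    have hYdu : ‖Ydag u‖ ≤ BYd := by
      calc ‖Ydag u‖ = ‖Ydag a + (Ydag u - Ydag a)‖ := by congr 1; abel
        _ ≤ ‖Ydag a‖ + ‖Ydag u - Ydag a‖ := norm_add_le _ _
        _ ≤ BYd := by
          rw [hBYd]
          apply add_le_add le_rfl
          calc ‖Ydag u - Ydag a‖ ≤ CYd * (u-a)^α := hYd a u le_rfl hau hub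
            _ ≤ CYd * (b-a)^α := by
              apply mul_le_mul_of_nonneg_left
                (Real.rpow_le_rpow (by linarith) (by linarith) (by linarith)) hCYd
    calc ‖(Ydag u).comp (tmul (X1 u u')) + Ysharp u u'‖
        ≤ ‖(Ydag u).comp (tmul (X1 u u'))‖ + ‖Ysharp u u'‖ := norm_add_le _ _
      _ ≤ BYd*‖tmul‖*(CX1*δ^α) + CYs*δ^α := by
        apply add_le_add
        · calc ‖(Ydag u).comp (tmul (X1 u u'))‖
              ≤ ‖Ydag u‖ * ‖tmul (X1 u u')‖ := ContinuousLinearMap.opNorm_comp_le _ _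
            _ ≤ ‖Ydag u‖ * (‖tmul‖ * ‖X1 u u'‖) := by
                apply mul_le_mul_of_nonneg_left (ContinuousLinearMap.le_opNorm _ _)
                  (norm_nonneg _)
            _ ≤ BYd * (‖tmul‖ * (CX1*δ^α)) :=
                mul_le_mul hYdu (mul_le_mul_of_nonneg_left hX1uu' htm)
                  (mul_nonneg htm (norm_nonneg _)) hBYdnn
            _ = BYd*‖tmul‖*(CX1*δ^α) := by ring
        · calc ‖Ysharp u u'‖ ≤ CYs * (u'-u)^(2*α) := hYs u u' hau huu' hu'b
            _ ≤ CYs * δ^(2*α) := by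
              apply mul_le_mul_of_nonneg_left
                (Real.rpow_le_rpow (by linarith) hd1 (by linarith)) hCYs
            _ ≤ CYs * δ^α :=
              mul_le_mul_of_nonneg_left (rpow_two_le δ α hδ0 hδ1 hα) hCYs
      _ = (BYd*‖tmul‖*CX1 + CYs) * δ^α := by ring
  -- X1 difference identity
  have hX1id : X1 u' v' - X1 u v = X1 v v' - X1 u u' := by
    have h12 : X1 u u' + X1 u' v' = X1 u v + X1 v v' := by
      rw [← hChen1 u u' v' hau huu' hu'v' hv'b, ← hChen1 u v v' hau huv hvv' hv'b]
    rw [sub_eq_sub_iff_add_eq_add, add_comm, h12, add_comm]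
  have hX1d : ‖X1 u' v' - X1 u v‖ ≤ 2*CX1*δ^α := by
    rw [hX1id]
    calc ‖X1 v v' - X1 u u'‖ ≤ ‖X1 v v'‖ + ‖X1 u u'‖ := norm_sub_le _ _
      _ ≤ CX1*δ^α + CX1*δ^α := add_le_add hX1vv' hX1uu'
      _ = 2*CX1*δ^α := by ring
  -- X2 difference identity
  have hX2id : X2 u' v' - X2 u v
      = X2 v v' + tmul (X1 u v) (X1 v v') - X2 u u' - tmul (X1 u u') (X1 u' v') := by
    have h1 := hChen2 u u' v' hau huu' hu'v' hv'b
    have h2 := hChen2 u v v' hau huv hvv' hv'b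
    have h12 : X2 u u' + X2 u' v' + tmul (X1 u u') (X1 u' v')
        = X2 u v + X2 v v' + tmul (X1 u v) (X1 v v') := by rw [← h1, ← h2]
    have : X2 u' v' = X2 u v + X2 v v' + tmul (X1 u v) (X1 v v')
        - X2 u u' - tmul (X1 u u') (X1 u' v') := by rw [← h12]; abel
    rw [this]; abel
  have hX2d : ‖X2 u' v' - X2 u v‖ ≤ (2*CX2 + 2*‖tmul‖*CX1*MX1)*δ^α := by
    rw [hX2id]
    have ht2 : ‖tmul (X1 u v) (X1 v v')‖ ≤ ‖tmul‖*MX1*(CX1*δ^α) := by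
      calc ‖tmul (X1 u v) (X1 v v')‖ ≤ ‖tmul (X1 u v)‖ * ‖X1 v v'‖ :=
            ContinuousLinearMap.le_opNorm _ _
        _ ≤ (‖tmul‖ * ‖X1 u v‖) * ‖X1 v v'‖ := by
            apply mul_le_mul_of_nonneg_right (ContinuousLinearMap.le_opNorm _ _)
              (norm_nonneg _)
        _ ≤ (‖tmul‖ * MX1) * (CX1*δ^α) :=
            mul_le_mul (mul_le_mul_of_nonneg_left hX1uv htm) hX1vv'
              (norm_nonneg _) (mul_nonneg htm hMX1nn)
        _ = ‖tmul‖*MX1*(CX1*δ^α) := by ring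
    have ht1 : ‖tmul (X1 u u') (X1 u' v')‖ ≤ ‖tmul‖*MX1*(CX1*δ^α) := by
      calc ‖tmul (X1 u u') (X1 u' v')‖ ≤ ‖tmul (X1 u u')‖ * ‖X1 u' v'‖ :=
            ContinuousLinearMap.le_opNorm _ _
        _ ≤ (‖tmul‖ * ‖X1 u u'‖) * ‖X1 u' v'‖ := by
            apply mul_le_mul_of_nonneg_right (ContinuousLinearMap.le_opNorm _ _)
              (norm_nonneg _)
        _ ≤ (‖tmul‖ * (CX1*δ^α)) * MX1 :=
            mul_le_mul (mul_le_mul_of_nonneg_left hX1uu' htm) hX1u'v'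
              (norm_nonneg _) (mul_nonneg htm (mul_nonneg hCX1 hδα))
        _ = ‖tmul‖*MX1*(CX1*δ^α) := by ring
    calc ‖X2 v v' + tmul (X1 u v) (X1 v v') - X2 u u' - tmul (X1 u u') (X1 u' v')‖
        ≤ ‖X2 v v' + tmul (X1 u v) (X1 v v') - X2 u u'‖ + ‖tmul (X1 u u') (X1 u' v')‖ :=
          norm_sub_le _ _
      _ ≤ (‖X2 v v' + tmul (X1 u v) (X1 v v')‖ + ‖X2 u u'‖) + ‖tmul (X1 u u') (X1 u' v')‖ := by
          gcongr
          exact norm_sub_le _ _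
      _ ≤ ((‖X2 v v'‖ + ‖tmul (X1 u v) (X1 v v')‖) + ‖X2 u u'‖) + ‖tmul (X1 u u') (X1 u' v')‖ := by
          gcongr
          exact norm_add_le _ _
      _ ≤ ((CX2*δ^α + ‖tmul‖*MX1*(CX1*δ^α)) + CX2*δ^α) + ‖tmul‖*MX1*(CX1*δ^α) := by
          gcongr <;> first
            | exact hX2vv' | exact ht2 | exact hX2uu' | exact ht1
      _ = (2*CX2 + 2*‖tmul‖*CX1*MX1)*δ^α := by ring
  -- decomposition
  have hdec : Xi X1 X2 Y Ydag u' v' - Xi X1 X2 Y Ydag u v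
      = Y u' (X1 u' v' - X1 u v) + (Y u' - Y u) (X1 u v)
        + Ydag u' (X2 u' v' - X2 u v) + (Ydag u' - Ydag u) (X2 u v) := by
    simp only [Xi, map_sub, ContinuousLinearMap.sub_apply]
    abel
  rw [hdec]
  have T1 : ‖Y u' (X1 u' v' - X1 u v)‖ ≤ BY * (2*CX1*δ^α) := by
    calc ‖Y u' (X1 u' v' - X1 u v)‖ ≤ ‖Y u'‖ * ‖X1 u' v' - X1 u v‖ :=
          ContinuousLinearMap.le_opNorm _ _
      _ ≤ BY * (2*CX1*δ^α) :=
          mul_le_mul hYu' hX1d (norm_nonneg _) hBYnn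
  have T2 : ‖(Y u' - Y u) (X1 u v)‖ ≤ ((BYd*‖tmul‖*CX1 + CYs) * δ^α) * MX1 := by
    calc ‖(Y u' - Y u) (X1 u v)‖ ≤ ‖Y u' - Y u‖ * ‖X1 u v‖ :=
          ContinuousLinearMap.le_opNorm _ _
      _ ≤ ((BYd*‖tmul‖*CX1 + CYs) * δ^α) * MX1 :=
          mul_le_mul hYdiff hX1uv (norm_nonneg _)
            (by apply mul_nonneg _ hδα
                apply add_nonneg _ hCYs
                exact mul_nonneg (mul_nonneg hBYdnn htm) hCX1)
  have T3 : ‖Ydag u' (X2 u' v' - X2 u v)‖ ≤ BYd * ((2*CX2 + 2*‖tmul‖*CX1*MX1)*δ^α) := by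
    calc ‖Ydag u' (X2 u' v' - X2 u v)‖ ≤ ‖Ydag u'‖ * ‖X2 u' v' - X2 u v‖ :=
          ContinuousLinearMap.le_opNorm _ _
      _ ≤ BYd * ((2*CX2 + 2*‖tmul‖*CX1*MX1)*δ^α) :=
          mul_le_mul hYdu' hX2d (norm_nonneg _) hBYdnn
  have T4 : ‖(Ydag u' - Ydag u) (X2 u v)‖ ≤ (CYd * δ^α) * MX2 := by
    calc ‖(Ydag u' - Ydag u) (X2 u v)‖ ≤ ‖Ydag u' - Ydag u‖ * ‖X2 u v‖ :=
          ContinuousLinearMap.le_opNorm _ _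
      _ ≤ (CYd * δ^α) * MX2 :=
          mul_le_mul hYddiff hX2uv (norm_nonneg _) (mul_nonneg hCYd hδα)
  calc ‖Y u' (X1 u' v' - X1 u v) + (Y u' - Y u) (X1 u v)
        + Ydag u' (X2 u' v' - X2 u v) + (Ydag u' - Ydag u) (X2 u v)‖
      ≤ ‖Y u' (X1 u' v' - X1 u v) + (Y u' - Y u) (X1 u v)
          + Ydag u' (X2 u' v' - X2 u v)‖ + ‖(Ydag u' - Ydag u) (X2 u v)‖ := norm_add_le _ _
    _ ≤ (‖Y u' (X1 u' v' - X1 u v) + (Y u' - Y u) (X1 u v)‖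
          + ‖Ydag u' (X2 u' v' - X2 u v)‖) + ‖(Ydag u' - Ydag u) (X2 u v)‖ := by
        gcongr; exact norm_add_le _ _
    _ ≤ ((‖Y u' (X1 u' v' - X1 u v)‖ + ‖(Y u' - Y u) (X1 u v)‖)
          + ‖Ydag u' (X2 u' v' - X2 u v)‖) + ‖(Ydag u' - Ydag u) (X2 u v)‖ := by
        gcongr; exact norm_add_le _ _
    _ ≤ ((BY * (2*CX1*δ^α) + ((BYd*‖tmul‖*CX1 + CYs) * δ^α) * MX1)
          + BYd * ((2*CX2 + 2*‖tmul‖*CX1*MX1)*δ^α)) + (CYd * δ^α) * MX2 := by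
        gcongr <;> first | exact T1 | exact T2 | exact T3 | exact T4
    _ = Dc Y Ydag a b α tmul CX1 CX2 CYd CYs * δ ^ α := by
        rw [Dc, hBY, hBYd, hMX1, hMX2]; ring

end Cont

section Compare

variable {V V2 W : Type*} [NormedAddCommGroup V] [NormedSpace ℝ V]
    [NormedAddCommGroup V2] [NormedSpace ℝ V2]
    [NormedAddCommGroup W] [NormedSpace ℝ W]

variable (X1 : ℝ → ℝ → V) (X2 : ℝ → ℝ → V2)
    (Y : ℝ → V →L[ℝ] W) (Ydag : ℝ → V2 →L[ℝ] W)
    (a b α : ℝ)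
    (tmul : V →L[ℝ] V →L[ℝ] V2)
    (Ysharp : ℝ → ℝ → V →L[ℝ] W)
    (CX1 CX2 CYd CYs : ℝ)

/-- the uniform grid on `[s,t]` with `N` intervals -/
noncomputable def grid (s t : ℝ) (N : ℕ) : ℕ → ℝ :=
  fun i => s + (min i N : ℕ) * ((t - s)/N)

theorem grid_mono (s t : ℝ) (N : ℕ) (hst : s ≤ t) : Monotone (grid s t N) := by
  intro i j hij
  unfold grid
  have h0 : (0:ℝ) ≤ (t-s)/N := div_nonneg (by linarith) (Nat.cast_nonneg N)
  have : ((min i N : ℕ) : ℝ) ≤ ((min j N : ℕ) : ℝ) := by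
    exact_mod_cast min_le_min hij (le_refl N)
  nlinarith [this, h0]

theorem grid_zero (s t : ℝ) (N : ℕ) : grid s t N 0 = s := by simp [grid]

theorem grid_last (s t : ℝ) (N : ℕ) (hN : 1 ≤ N) : grid s t N N = t := by
  unfold grid
  rw [min_self]
  have : (N:ℝ) ≠ 0 := Nat.cast_ne_zero.mpr (by omega)
  field_simp
  ring

theorem grid_le (s t : ℝ) (N : ℕ) (hst : s ≤ t) (i : ℕ) :
    s ≤ grid s t N i ∧ grid s t N i ≤ t := by
  constructor
  · have := grid_mono s t N hst (Nat.zero_le i)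
    rwa [grid_zero] at this
  · unfold grid
    have hmin : ((min i N : ℕ) : ℝ) ≤ (N:ℝ) := by exact_mod_cast min_le_right i N
    have h0 : (0:ℝ) ≤ (t-s)/N := div_nonneg (by linarith) (Nat.cast_nonneg N)
    have h2 : ((min i N : ℕ) : ℝ) * ((t-s)/N) ≤ (N:ℝ) * ((t-s)/N) :=
      mul_le_mul_of_nonneg_right hmin h0
    rcases Nat.eq_zero_or_pos N with h | h
    · subst h; simp at h2 ⊢; nlinarith [h2]
    · have : (N:ℝ) * ((t-s)/N) = t - s := by
        field_simp
      nlinarith [h2, this]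

theorem grid_step (s t : ℝ) (N : ℕ) (i : ℕ) (hi : i < N) :
    grid s t N (i+1) - grid s t N i = (t-s)/N := by
  unfold grid
  rw [min_eq_left (by omega : i+1 ≤ N), min_eq_left (by omega : i ≤ N)]
  push_cast
  ring

end Compare

section Compare2

variable {V V2 W : Type*} [NormedAddCommGroup V] [NormedSpace ℝ V]
    [NormedAddCommGroup V2] [NormedSpace ℝ V2]
    [NormedAddCommGroup W] [NormedSpace ℝ W]

variable (X1 : ℝ → ℝ → V) (X2 : ℝ → ℝ → V2)
    (Y : ℝ → V →L[ℝ] W) (Ydag : ℝ → V2 →L[ℝ] W)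
    (a b α : ℝ)
    (tmul : V →L[ℝ] V →L[ℝ] V2)
    (Ysharp : ℝ → ℝ → V →L[ℝ] W)
    (CX1 CX2 CYd CYs : ℝ)

theorem compare_grid (hα : 1/3 < α) (hα2 : α ≤ 1/2)
    (hCX1 : 0 ≤ CX1) (hCX2 : 0 ≤ CX2) (hCYd : 0 ≤ CYd) (hCYs : 0 ≤ CYs)
    (hX1 : ∀ s t : ℝ, a ≤ s → s ≤ t → t ≤ b → ‖X1 s t‖ ≤ CX1 * (t - s) ^ α)
    (hX2 : ∀ s t : ℝ, a ≤ s → s ≤ t → t ≤ b → ‖X2 s t‖ ≤ CX2 * (t - s) ^ (2 * α))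
    (hYd : ∀ s t : ℝ, a ≤ s → s ≤ t → t ≤ b → ‖Ydag t - Ydag s‖ ≤ CYd * (t - s) ^ α)
    (hYs : ∀ s t : ℝ, a ≤ s → s ≤ t → t ≤ b → ‖Ysharp s t‖ ≤ CYs * (t - s) ^ (2 * α))
    (hChen1 : ∀ s u t : ℝ, a ≤ s → s ≤ u → u ≤ t → t ≤ b →
      X1 s t = X1 s u + X1 u t)
    (hChen2 : ∀ s u t : ℝ, a ≤ s → s ≤ u → u ≤ t → t ≤ b →
      X2 s t = X2 s u + X2 u t + tmul (X1 s u) (X1 u t))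
    (hCtrl : ∀ s t : ℝ, a ≤ s → s ≤ t → t ≤ b →
      Y t - Y s = (Ydag s).comp (tmul (X1 s t)) + Ysharp s t)
    (s t : ℝ) (has : a ≤ s) (hst : s < t) (htb : t ≤ b)
    (N : ℕ) (hN : 1 ≤ N) (δ : ℝ) (hδ0 : 0 < δ) (hδ1 : δ ≤ 1)
    (hδh : δ ≤ (t-s)/N)
    (M : ℕ) (q : ℕ → ℝ) (hq : Monotone q) (hq0 : q 0 = s) (hqM : q M = t)
    (hmesh : ∀ k, k < M → q (k+1) - q k < δ) :
    ‖RS X1 X2 Y Ydag M q - RS X1 X2 Y Ydag N (grid s t N)‖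
      ≤ ((CYs * CX1 + CYd * CX2) * (2^(3*α) * Zed α)) * (2*((t-s)/N))^(3*α-1) * (t-s)
        + N * (Dc Y Ydag a b α tmul CX1 CX2 CYd CYs * δ^α) := by
  have hab : a ≤ b := le_trans has (le_trans (le_of_lt hst) htb)
  have hts : (0:ℝ) < t - s := by linarith
  have hh : (0:ℝ) < (t-s)/N := div_pos hts (by exact_mod_cast Nat.pos_of_ne_zero (by omega))
  set h := (t-s)/N with hhdef
  set p := grid s t N with hpdef
  have hp : Monotone p := grid_mono s t N (le_of_lt hst)
  have hp0 : p 0 = s := grid_zero s t N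
  have hpN : p N = t := grid_last s t N hN
  have hple : ∀ i, s ≤ p i ∧ p i ≤ t := grid_le s t N (le_of_lt hst)
  have hstep : ∀ i, i < N → p (i+1) - p i = h := grid_step s t N
  -- the index selection
  have hex : ∀ i : ℕ, ∃ k, (M ≤ k ∨ p i ≤ q k) := fun i => ⟨M, Or.inl le_rfl⟩
  set σ : ℕ → ℕ := fun i => if i < N then Nat.find (hex i) else M with hσdef
  have hσle : ∀ i, σ i ≤ M := by
    intro i
    dsimp [σ]
    split_ifs with hi
    · exact Nat.find_le (Or.inl le_rfl)
    · exact le_rfl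
  have hlow : ∀ i, p i ≤ q (σ i) := by
    intro i
    dsimp [σ]
    split_ifs with hi
    · rcases Nat.find_spec (hex i) with hM | hle
      · have : Nat.find (hex i) = M := le_antisymm (Nat.find_le (Or.inl le_rfl)) hM
        rw [this, hqM]
        exact (hple i).2
      · exact hle
    · rw [hqM]; exact (hple i).2
  have hup : ∀ i, q (σ i) ≤ p i + δ := by
    intro i
    dsimp [σ]
    split_ifs with hi
    · cases hk : Nat.find (hex i) with
      | zero =>
        rw [hq0]
        have := (hple i).1
        linarith
      | succ k =>
        have hmin := Nat.find_min (hex i) (show k < Nat.find (hex i) by omega)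
        push_neg at hmin
        obtain ⟨hkM, hqk⟩ := hmin
        have := hmesh k hkM
        linarith
    · rw [hqM]
      have hiN : N ≤ i := by omega
      have : p N ≤ p i := hp hiN
      rw [hpN] at this
      have := (hple i).2
      linarith
  have hσmono : Monotone σ := by
    intro i j hij
    dsimp [σ]
    split_ifs with hi hj hj
    · apply Nat.find_mono
      intro n hn
      rcases hn with hM | hle
      · exact Or.inl hM
      · exact Or.inr (le_trans (hp hij) hle)
    · exact Nat.find_le (Or.inl le_rfl)
    · omega
    · exact le_rfl
  have hσ0 : σ 0 = 0 := by
    dsimp [σ]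
    rw [if_pos (by omega : 0 < N)]
    rw [Nat.find_eq_zero]
    right
    rw [hp0, hq0]
  have hσN : σ N = M := by
    dsimp [σ]
    rw [if_neg (by omega)]
  -- block sizes
  have hblock : ∀ j, j < N → q (σ (j+1)) - q (σ j) ≤ 2*h := by
    intro j hj
    have h1 : q (σ (j+1)) ≤ p (j+1) + δ := hup (j+1)
    have h2 : p j ≤ q (σ j) := hlow j
    have h3 : p (j+1) - p j = h := hstep j hj
    linarith
  have hqa : a ≤ q 0 := by rw [hq0]; exact has
  have hqb : q M ≤ b := by rw [hqM]; exact htb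
  -- first comparison: q to its sub-partition along σ
  have hcomp1 := refine_est X1 X2 Y Ydag a b α tmul Ysharp CX1 CX2 CYd CYs hα
    hCX1 hCX2 hCYd hCYs hX1 hX2 hYd hYs hChen1 hChen2 hCtrl
    M N q σ hq hqa hqb hσmono hσ0 hσN (2*h) (by linarith) hblock
  rw [hq0, hqM] at hcomp1
  -- second comparison: sub-partition to grid
  have hcomp2 : ‖RS X1 X2 Y Ydag N (fun j => q (σ j)) - RS X1 X2 Y Ydag N p‖
      ≤ N * (Dc Y Ydag a b α tmul CX1 CX2 CYd CYs * δ^α) := by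
    have hdiff : RS X1 X2 Y Ydag N (fun j => q (σ j)) - RS X1 X2 Y Ydag N p
        = ∑ i ∈ Finset.range N,
            (Xi X1 X2 Y Ydag (q (σ i)) (q (σ (i+1))) - Xi X1 X2 Y Ydag (p i) (p (i+1))) := by
      rw [RS, RS, Finset.sum_sub_distrib]
    rw [hdiff]
    calc ‖∑ i ∈ Finset.range N,
          (Xi X1 X2 Y Ydag (q (σ i)) (q (σ (i+1))) - Xi X1 X2 Y Ydag (p i) (p (i+1)))‖
        ≤ ∑ i ∈ Finset.range N, (Dc Y Ydag a b α tmul CX1 CX2 CYd CYs * δ^α) := by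
          apply norm_sum_le_of_le
          intro i hi
          rw [Finset.mem_range] at hi
          apply xi_cont X1 X2 Y Ydag a b α tmul Ysharp CX1 CX2 CYd CYs
            (by linarith) hab hCX1 hCX2 hCYd hCYs hX1 hX2 hYd hYs hChen1 hChen2 hCtrl
            δ (p i) (p (i+1)) (q (σ i)) (q (σ (i+1)))
            (le_of_lt hδ0) hδ1
          · exact le_trans has (hple i).1
          · exact hlow i
          · have := hup i
            have := hstep i hi
            linarith
          · exact hlow (i+1)
          · calc q (σ (i+1)) ≤ q M := hq (hσle (i+1))
              _ = t := hqM
              _ ≤ b := htb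
          · have := hlow i
            have := hup i
            linarith
          · have := hlow (i+1)
            have := hup (i+1)
            linarith
      _ = N * (Dc Y Ydag a b α tmul CX1 CX2 CYd CYs * δ^α) := by
          rw [Finset.sum_const, Finset.card_range, nsmul_eq_mul]
  calc ‖RS X1 X2 Y Ydag M q - RS X1 X2 Y Ydag N p‖
      ≤ ‖RS X1 X2 Y Ydag M q - RS X1 X2 Y Ydag N (fun j => q (σ j))‖
        + ‖RS X1 X2 Y Ydag N (fun j => q (σ j)) - RS X1 X2 Y Ydag N p‖ := by
        have : RS X1 X2 Y Ydag M q - RS X1 X2 Y Ydag N p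
            = (RS X1 X2 Y Ydag M q - RS X1 X2 Y Ydag N (fun j => q (σ j)))
              + (RS X1 X2 Y Ydag N (fun j => q (σ j)) - RS X1 X2 Y Ydag N p) := by abel
        rw [this]
        exact norm_add_le _ _
    _ ≤ ((CYs * CX1 + CYd * CX2) * (2^(3*α) * Zed α)) * (2*h)^(3*α-1) * (t-s)
        + N * (Dc Y Ydag a b α tmul CX1 CX2 CYd CYs * δ^α) := add_le_add hcomp1 hcomp2

end Compare2

section Main

variable {V V2 W : Type*} [NormedAddCommGroup V] [NormedSpace ℝ V]
    [NormedAddCommGroup V2] [NormedSpace ℝ V2]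
    [NormedAddCommGroup W] [NormedSpace ℝ W] [CompleteSpace W]

variable (X1 : ℝ → ℝ → V) (X2 : ℝ → ℝ → V2)
    (Y : ℝ → V →L[ℝ] W) (Ydag : ℝ → V2 →L[ℝ] W)
    (a b α : ℝ)
    (tmul : V →L[ℝ] V →L[ℝ] V2)
    (Ysharp : ℝ → ℝ → V →L[ℝ] W)
    (CX1 CX2 CYd CYs : ℝ)

theorem exists_limit (hα : 1/3 < α) (hα2 : α ≤ 1/2)
    (hCX1 : 0 ≤ CX1) (hCX2 : 0 ≤ CX2) (hCYd : 0 ≤ CYd) (hCYs : 0 ≤ CYs)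
    (hX1 : ∀ s t : ℝ, a ≤ s → s ≤ t → t ≤ b → ‖X1 s t‖ ≤ CX1 * (t - s) ^ α)
    (hX2 : ∀ s t : ℝ, a ≤ s → s ≤ t → t ≤ b → ‖X2 s t‖ ≤ CX2 * (t - s) ^ (2 * α))
    (hYd : ∀ s t : ℝ, a ≤ s → s ≤ t → t ≤ b → ‖Ydag t - Ydag s‖ ≤ CYd * (t - s) ^ α)
    (hYs : ∀ s t : ℝ, a ≤ s → s ≤ t → t ≤ b → ‖Ysharp s t‖ ≤ CYs * (t - s) ^ (2 * α))
    (hChen1 : ∀ s u t : ℝ, a ≤ s → s ≤ u → u ≤ t → t ≤ b →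
      X1 s t = X1 s u + X1 u t)
    (hChen2 : ∀ s u t : ℝ, a ≤ s → s ≤ u → u ≤ t → t ≤ b →
      X2 s t = X2 s u + X2 u t + tmul (X1 s u) (X1 u t))
    (hCtrl : ∀ s t : ℝ, a ≤ s → s ≤ t → t ≤ b →
      Y t - Y s = (Ydag s).comp (tmul (X1 s t)) + Ysharp s t)
    (s t : ℝ) (has : a ≤ s) (hst : s < t) (htb : t ≤ b) :
    ∃ I : W,
      (∀ ε : ℝ, 0 < ε → ∃ δ : ℝ, 0 < δ ∧
        ∀ (M : ℕ) (q : ℕ → ℝ), Monotone q → q 0 = s → q M = t →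
          (∀ k, k < M → q (k+1) - q k < δ) →
          ‖RS X1 X2 Y Ydag M q - I‖ < ε)
      ∧ ‖I - Xi X1 X2 Y Ydag s t‖
          ≤ ((CYs * CX1 + CYd * CX2) * (2^(3*α) * Zed α)) * (t-s)^(3*α) := by
  have hab : a ≤ b := le_trans has (le_trans (le_of_lt hst) htb)
  have hts : (0:ℝ) < t - s := by linarith
  set C2 := (CYs * CX1 + CYd * CX2) * (2^(3*α) * Zed α) with hC2
  set D := Dc Y Ydag a b α tmul CX1 CX2 CYd CYs with hD
  have hDnn : 0 ≤ D := Dc_nonneg Y Ydag a b α tmul CX1 CX2 CYd CYs hab hCX1 hCX2 hCYd hCYs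
  -- KEY: for every ε > 0 there are δ > 0 and an anchor value G with
  -- all fine Riemann sums within ε of G
  have KEY : ∀ ε : ℝ, 0 < ε → ∃ δ : ℝ, 0 < δ ∧ ∃ G : W,
      ∀ (M : ℕ) (q : ℕ → ℝ), Monotone q → q 0 = s → q M = t →
        (∀ k, k < M → q (k+1) - q k < δ) →
        ‖RS X1 X2 Y Ydag M q - G‖ ≤ ε := by
    intro ε hε
    -- choose N
    have t1 : Tendsto (fun n : ℕ => (2*(t-s)) / n) atTop (nhds 0) :=
      tendsto_const_div_atTop_nhds_zero_nat (2*(t-s))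
    have hco : ContinuousAt (fun z : ℝ => z^(3*α-1)) 0 :=
      Real.continuousAt_rpow_const 0 (3*α-1) (Or.inr (by linarith))
    have t2 : Tendsto (fun n : ℕ => ((2*(t-s))/n)^(3*α-1)) atTop (nhds 0) := by
      have := hco.tendsto.comp t1
      simpa [Function.comp_def, Real.zero_rpow (show 3*α-1 ≠ 0 by intro hc; nlinarith)] using this
    have t3 : Tendsto (fun n : ℕ => C2 * ((2*(t-s))/n)^(3*α-1) * (t-s)) atTop (nhds 0) := by
      have := (t2.const_mul C2).mul_const (t-s)
      simpa using this
    have hev : ∀ᶠ n : ℕ in atTop, C2 * ((2*(t-s))/n)^(3*α-1) * (t-s) < ε/2 :=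
      t3.eventually (gt_mem_nhds (by linarith))
    obtain ⟨N₁, hN₁⟩ := eventually_atTop.mp hev
    set N := max N₁ 1 with hNdef
    have hN1 : 1 ≤ N := le_max_right _ _
    have hNR : (1:ℝ) ≤ (N:ℝ) := by exact_mod_cast hN1
    have hNbound := hN₁ N (le_max_left _ _)
    -- choose δ
    set c := (ε/2) / ((N:ℝ) * (D+1)) with hc
    have hcpos : 0 < c := by
      apply div_pos (by linarith)
      apply mul_pos (by linarith) (by linarith)
    set δ := min (min 1 ((t-s)/N)) (c^(α⁻¹)) with hδdef
    have hδpos : 0 < δ := by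
      apply lt_min (lt_min one_pos (div_pos hts (by linarith)))
      exact Real.rpow_pos_of_pos hcpos _
    have hδ1 : δ ≤ 1 := le_trans (min_le_left _ _) (min_le_left _ _)
    have hδh : δ ≤ (t-s)/N := le_trans (min_le_left _ _) (min_le_right _ _)
    have hδc : δ^α ≤ c := by
      calc δ^α ≤ (c^(α⁻¹))^α :=
            Real.rpow_le_rpow (le_of_lt hδpos) (min_le_right _ _) (by linarith)
        _ = c := Real.rpow_inv_rpow (le_of_lt hcpos) (by intro hc0; nlinarith)
    have hsecond : (N:ℝ) * (D * δ^α) ≤ ε/2 := by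
      have h1 : D * δ^α ≤ (D+1) * c := by
        apply mul_le_mul (by linarith) hδc (Real.rpow_nonneg (le_of_lt hδpos) _) (by linarith)
      calc (N:ℝ) * (D * δ^α) ≤ (N:ℝ) * ((D+1) * c) := by
            apply mul_le_mul_of_nonneg_left h1 (by linarith)
        _ = ε/2 := by
            rw [hc]
            field_simp
      -- end
    refine ⟨δ, hδpos, RS X1 X2 Y Ydag N (grid s t N), ?_⟩
    intro M q hq hq0 hqM hmesh
    have hcg := compare_grid X1 X2 Y Ydag a b α tmul Ysharp CX1 CX2 CYd CYs hα hα2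
      hCX1 hCX2 hCYd hCYs hX1 hX2 hYd hYs hChen1 hChen2 hCtrl
      s t has hst htb N hN1 δ hδpos hδ1 hδh M q hq hq0 hqM hmesh
    have heq : 2*((t-s)/N) = (2*(t-s))/N := by ring
    rw [heq] at hcg
    calc ‖RS X1 X2 Y Ydag M q - RS X1 X2 Y Ydag N (grid s t N)‖
        ≤ C2 * ((2*(t-s))/N)^(3*α-1) * (t-s) + N * (D * δ^α) := hcg
      _ ≤ ε/2 + ε/2 := add_le_add (le_of_lt hNbound) hsecond
      _ = ε := by ring
  -- the approximating sequence
  set A : ℕ → W := fun n => RS X1 X2 Y Ydag (n+1) (grid s t (n+1)) with hA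
  have hAmesh : ∀ (δ : ℝ), 0 < δ → ∃ n₀ : ℕ, ∀ n, n₀ ≤ n →
      ∀ k, k < n+1 → grid s t (n+1) (k+1) - grid s t (n+1) k < δ := by
    intro δ hδ
    obtain ⟨n₀, hn₀⟩ := exists_nat_gt ((t-s)/δ)
    refine ⟨n₀, fun n hn k hk => ?_⟩
    rw [grid_step s t (n+1) k hk]
    rw [div_lt_iff₀ (by positivity)]
    have h1 : (t-s)/δ < (n₀:ℝ) := hn₀
    have h2 : (n₀:ℝ) ≤ (n:ℝ) := by exact_mod_cast hn
    have h3 : (t-s) < δ * (n₀:ℝ) := by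
      rw [div_lt_iff₀ hδ] at h1
      linarith
    have : (0:ℝ) < δ := hδ
    have h5 : ((n+1:ℕ):ℝ) = (n:ℝ)+1 := by push_cast; ring
    rw [h5]
    nlinarith
  have hAq : ∀ n : ℕ, Monotone (grid s t (n+1)) ∧ grid s t (n+1) 0 = s
      ∧ grid s t (n+1) (n+1) = t :=
    fun n => ⟨grid_mono s t (n+1) (le_of_lt hst), grid_zero s t (n+1),
      grid_last s t (n+1) (by omega)⟩
  have hcauchy : CauchySeq A := by
    rw [Metric.cauchySeq_iff']
    intro ε hε
    obtain ⟨δ, hδpos, G, hG⟩ := KEY (ε/3) (by linarith)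
    obtain ⟨n₀, hn₀⟩ := hAmesh δ hδpos
    refine ⟨n₀, fun n hn => ?_⟩
    have h1 := hG (n+1) (grid s t (n+1)) (hAq n).1 (hAq n).2.1 (hAq n).2.2
      (hn₀ n hn)
    have h2 := hG (n₀+1) (grid s t (n₀+1)) (hAq n₀).1 (hAq n₀).2.1 (hAq n₀).2.2
      (hn₀ n₀ le_rfl)
    rw [dist_eq_norm]
    calc ‖A n - A n₀‖ = ‖(A n - G) + (G - A n₀)‖ := by abel_nf
      _ ≤ ‖A n - G‖ + ‖G - A n₀‖ := norm_add_le _ _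
      _ ≤ ε/3 + ε/3 := by
          apply add_le_add h1
          rw [norm_sub_rev]
          exact h2
      _ < ε := by linarith
  obtain ⟨I, hI⟩ := cauchySeq_tendsto_of_complete hcauchy
  refine ⟨I, ?_, ?_⟩
  · -- convergence of general Riemann sums
    intro ε hε
    obtain ⟨δ, hδpos, G, hG⟩ := KEY (ε/3) (by linarith)
    refine ⟨δ, hδpos, ?_⟩
    intro M q hq hq0 hqM hmesh
    have hGI : ‖G - I‖ ≤ ε/3 := by
      obtain ⟨n₀, hn₀⟩ := hAmesh δ hδpos
      have hten : Tendsto (fun n => ‖A n - G‖) atTop (nhds ‖I - G‖) :=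
        ((hI.sub_const G).norm)
      apply (norm_sub_rev G I).trans_le (le_of_tendsto hten ?_)
      rw [eventually_atTop]
      refine ⟨n₀, fun n hn => ?_⟩
      exact hG (n+1) (grid s t (n+1)) (hAq n).1 (hAq n).2.1 (hAq n).2.2 (hn₀ n hn)
    have h1 := hG M q hq hq0 hqM hmesh
    calc ‖RS X1 X2 Y Ydag M q - I‖ = ‖(RS X1 X2 Y Ydag M q - G) + (G - I)‖ := by abel_nf
      _ ≤ ‖RS X1 X2 Y Ydag M q - G‖ + ‖G - I‖ := norm_add_le _ _
      _ ≤ ε/3 + ε/3 := add_le_add h1 hGI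
      _ < ε := by linarith
  · -- the sewing estimate
    have hbound : ∀ n : ℕ, ‖A n - Xi X1 X2 Y Ydag s t‖ ≤ C2 * (t-s)^(3*α) := by
      intro n
      have := core_est' X1 X2 Y Ydag a b α tmul Ysharp CX1 CX2 CYd CYs hα
        hCX1 hCX2 hCYd hCYs hX1 hX2 hYd hYs hChen1 hChen2 hCtrl
        (n+1) (grid s t (n+1)) (hAq n).1
        (by rw [(hAq n).2.1]; exact has)
        (by rw [(hAq n).2.2]; exact htb)
      rw [(hAq n).2.1, (hAq n).2.2] at this
      exact this
    have hten : Tendsto (fun n => ‖A n - Xi X1 X2 Y Ydag s t‖) atTop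
        (nhds ‖I - Xi X1 X2 Y Ydag s t‖) :=
      (hI.sub_const _).norm
    exact le_of_tendsto hten (Eventually.of_forall hbound)

end Main

/-- Existence of the rough integral of a controlled path, with the standard
sewing estimate.  `X = (X¹, X²)` is an `α`-Hölder rough path over `V` on `[a,b]`
(the second level takes values in a normed space `V2` playing the role of
`V ⊗ V`, with tensor map `tmul`), and `(Y, Y†, Y♯)` is a controlled path with
values in `L(V, W)`.  The compensated Riemann sums
`J_{s,t}(𝒫) = Σᵢ (Y_{tᵢ₋₁} X¹_{tᵢ₋₁,tᵢ} + Y†_{tᵢ₋₁} X²_{tᵢ₋₁,tᵢ})` converge as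
the mesh tends to `0`, and the limit `I = ∫ₛᵗ Y dX` satisfies
`‖I − (Y_s X¹_{s,t} + Y†_s X²_{s,t})‖
  ≤ κ_α (t−s)^{3α} (‖Y♯‖_{2α} ‖X¹‖_α + ‖Y†‖_α ‖X²‖_{2α})`
with `κ_α = 2^{3α} ζ(3α)`. -/
theorem rough_integral_exists_and_estimate
    {V V2 W : Type*} [NormedAddCommGroup V] [NormedSpace ℝ V]
    [NormedAddCommGroup V2] [NormedSpace ℝ V2]
    [NormedAddCommGroup W] [NormedSpace ℝ W] [CompleteSpace W]
    (a b α : ℝ) (hab : a ≤ b) (hα1 : 1/3 < α) (hα2 : α ≤ 1/2)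
    (X1 : ℝ → ℝ → V) (X2 : ℝ → ℝ → V2)
    (tmul : V →L[ℝ] V →L[ℝ] V2)
    (Y : ℝ → V →L[ℝ] W)
    (Ydag : ℝ → V2 →L[ℝ] W)
    (Ysharp : ℝ → ℝ → V →L[ℝ] W)
    (CX1 CX2 CYd CYs : ℝ)
    -- Hölder bounds (`CX1, CX2, CYd, CYs` bound the seminorms
    -- `‖X¹‖_{α,[a,b]}, ‖X²‖_{2α,[a,b]}, ‖Y†‖_{α,[a,b]}, ‖Y♯‖_{2α,[a,b]}`)
    (hX1 : ∀ s t : ℝ, a ≤ s → s ≤ t → t ≤ b → ‖X1 s t‖ ≤ CX1 * (t - s) ^ α)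
    (hX2 : ∀ s t : ℝ, a ≤ s → s ≤ t → t ≤ b → ‖X2 s t‖ ≤ CX2 * (t - s) ^ (2 * α))
    (hYd : ∀ s t : ℝ, a ≤ s → s ≤ t → t ≤ b → ‖Ydag t - Ydag s‖ ≤ CYd * (t - s) ^ α)
    (hYs : ∀ s t : ℝ, a ≤ s → s ≤ t → t ≤ b → ‖Ysharp s t‖ ≤ CYs * (t - s) ^ (2 * α))
    -- Chen's relations
    (hChen1 : ∀ s u t : ℝ, a ≤ s → s ≤ u → u ≤ t → t ≤ b →
      X1 s t = X1 s u + X1 u t)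
    (hChen2 : ∀ s u t : ℝ, a ≤ s → s ≤ u → u ≤ t → t ≤ b →
      X2 s t = X2 s u + X2 u t + tmul (X1 s u) (X1 u t))
    -- the controlled path relation `Y_t − Y_s = Y†_s X¹_{s,t} + Y♯_{s,t}`
    (hCtrl : ∀ s t : ℝ, a ≤ s → s ≤ t → t ≤ b →
      Y t - Y s = (Ydag s).comp (tmul (X1 s t)) + Ysharp s t) :
    ∀ s t : ℝ, a ≤ s → s ≤ t → t ≤ b →
      ∃ I : W,
        -- convergence of compensated Riemann sums as the mesh tends to 0
        (∀ ε : ℝ, 0 < ε → ∃ δ : ℝ, 0 < δ ∧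
          ∀ (N : ℕ) (p : Fin (N + 1) → ℝ), Monotone p →
            p 0 = s → p (Fin.last N) = t →
            (∀ i : Fin N, p i.succ - p i.castSucc < δ) →
            ‖(∑ i : Fin N,
                (Y (p i.castSucc) (X1 (p i.castSucc) (p i.succ))
                  + Ydag (p i.castSucc) (X2 (p i.castSucc) (p i.succ)))) - I‖ < ε)
        -- the sewing estimate with `κ_α = 2^{3α} ζ(3α)`
        ∧ ‖I - (Y s (X1 s t) + Ydag s (X2 s t))‖
            ≤ (2 : ℝ) ^ (3 * α) * (∑' n : ℕ, 1 / ((n : ℝ) + 1) ^ (3 * α))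
              * (t - s) ^ (3 * α) * (CYs * CX1 + CYd * CX2) := by
  intro s t has hst htb
  rcases eq_or_lt_of_le hst with heq | hlt
  · -- degenerate case s = t
    subst heq
    obtain ⟨hX1ss, hX2ss, -⟩ :=
      xi_self X1 X2 Y Ydag a b tmul hChen1 hChen2 s has htb
    refine ⟨0, ?_, ?_⟩
    · intro ε hε
      refine ⟨1, one_pos, ?_⟩
      intro N p hp hp0 hplast _
      have hconst : ∀ i : Fin (N+1), p i = s := by
        intro i
        have h1 : p 0 ≤ p i := hp (Fin.zero_le i)
        have h2 : p i ≤ p (Fin.last N) := hp (Fin.le_last i)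
        rw [hp0] at h1
        rw [hplast] at h2
        linarith
      have hzero : (∑ i : Fin N,
          (Y (p i.castSucc) (X1 (p i.castSucc) (p i.succ))
            + Ydag (p i.castSucc) (X2 (p i.castSucc) (p i.succ)))) = 0 := by
        apply Finset.sum_eq_zero
        intro i _
        rw [hconst i.castSucc, hconst i.succ, hX1ss, hX2ss]
        simp
      rw [hzero]
      simpa using hε
    · rw [hX1ss, hX2ss, sub_self, Real.zero_rpow (by intro hc; nlinarith : 3*α ≠ 0)]
      simp
  · -- main case s < t
    have hab' : a < b := lt_of_le_of_lt has (lt_of_lt_of_le hlt htb)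
    have hba1 : (0:ℝ) < (b-a)^α := Real.rpow_pos_of_pos (by linarith) α
    have hba2 : (0:ℝ) < (b-a)^(2*α) := Real.rpow_pos_of_pos (by linarith) (2*α)
    have hCX1 : 0 ≤ CX1 := by
      have := hX1 a b le_rfl hab le_rfl
      nlinarith [norm_nonneg (X1 a b)]
    have hCX2 : 0 ≤ CX2 := by
      have := hX2 a b le_rfl hab le_rfl
      nlinarith [norm_nonneg (X2 a b)]
    have hCYd : 0 ≤ CYd := by
      have := hYd a b le_rfl hab le_rfl
      nlinarith [norm_nonneg (Ydag b - Ydag a)]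
    have hCYs : 0 ≤ CYs := by
      have := hYs a b le_rfl hab le_rfl
      nlinarith [norm_nonneg (Ysharp a b)]
    obtain ⟨I, hconv, hest⟩ := exists_limit X1 X2 Y Ydag a b α tmul Ysharp
      CX1 CX2 CYd CYs hα1 hα2 hCX1 hCX2 hCYd hCYs hX1 hX2 hYd hYs
      hChen1 hChen2 hCtrl s t has hlt htb
    refine ⟨I, ?_, ?_⟩
    · intro ε hε
      obtain ⟨δ, hδpos, hδ⟩ := hconv ε hε
      refine ⟨δ, hδpos, ?_⟩
      intro N p hp hp0 hplast hmesh
      rcases Nat.eq_zero_or_pos N with hN0 | hNpos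
      · exfalso
        subst hN0
        have : p 0 = p (Fin.last 0) := by congr
        rw [hp0, hplast] at this
        linarith
      set q : ℕ → ℝ := fun i => p ⟨min i N, by omega⟩ with hqdef
      have hqm : Monotone q := by
        intro i j hij
        apply hp
        simp only [Fin.mk_le_mk]
        exact min_le_min hij le_rfl
      have hq0 : q 0 = s := by
        rw [← hp0]
        simp only [hqdef]
        congr 1
      have hqN : q N = t := by
        rw [← hplast]
        simp only [hqdef]
        congr 1
        ext
        simp [Fin.last]
      have hqmesh : ∀ k, k < N → q (k+1) - q k < δ := by
        intro k hk
        have e1 : q (k+1) = p ((⟨k, hk⟩ : Fin N).succ) := by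
          simp only [hqdef]
          congr 1
          ext
          simp [Fin.succ]
          try omega
        have e2 : q k = p ((⟨k, hk⟩ : Fin N).castSucc) := by
          simp only [hqdef]
          congr 1
          ext
          simp [Fin.castSucc]
          try omega
        rw [e1, e2]
        exact hmesh ⟨k, hk⟩
      have hsum : (∑ i : Fin N,
          (Y (p i.castSucc) (X1 (p i.castSucc) (p i.succ))
            + Ydag (p i.castSucc) (X2 (p i.castSucc) (p i.succ))))
          = RS X1 X2 Y Ydag N q := by
        rw [RS, ← Fin.sum_univ_eq_sum_range (fun k => Xi X1 X2 Y Ydag (q k) (q (k+1))) N]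
        apply Finset.sum_congr rfl
        intro i _
        have e1 : q i.val = p i.castSucc := by
          simp only [hqdef]
          congr 1
          ext
          simp [Fin.castSucc]
          try omega
        have e2 : q (i.val+1) = p i.succ := by
          simp only [hqdef]
          congr 1
          ext
          simp [Fin.succ]
          try omega
        rw [Xi, e1, e2]
      rw [hsum]
      exact hδ N q hqm hq0 hqN hqmesh
    · calc ‖I - (Y s (X1 s t) + Ydag s (X2 s t))‖
          = ‖I - Xi X1 X2 Y Ydag s t‖ := rfl
        _ ≤ ((CYs * CX1 + CYd * CX2) * (2^(3*α) * Zed α)) * (t-s)^(3*α) := hest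
        _ = (2 : ℝ) ^ (3 * α) * (∑' n : ℕ, 1 / ((n : ℝ) + 1) ^ (3 * α))
              * (t - s) ^ (3 * α) * (CYs * CX1 + CYd * CX2) := by
            rw [Zed]
            ring
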